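/- For all nonnegative integers n, the HR polynomials satisfy the three-term recurrence P_{n+1}(z) + d_n P_n(z) = z (P_n(z) + b_n P_{n−1}(z)), where d_n = −(n+β)/(n+α+1) and b_n = −n(n+α+β)/((n+α)(n+α+1)) (with the convention P_{−1} = 0). -/

import Mathlib

open Finset

noncomputable def poch (a : ℝ) (k : ℕ) : ℝ := ∏ i ∈ Finset.range k, (a + i)

noncomputable def HR (n : ℕ) (α β : ℝ) (z : ℝ) : ℝ :=
  (poch β n / poch (α + 1) n) *
    ∑ k ∈ Finset.range (n + 1),
      (poch (-(n : ℝ)) k * poch (α + 1) k) / ((k.factorial : ℝ) * poch (1 - β - (n : ℝ)) k) * z ^ k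

lemma poch_zero (a : ℝ) : poch a 0 = 1 := by simp [poch]

lemma poch_succ (a : ℝ) (k : ℕ) : poch a (k+1) = poch a k * (a + k) := by
  simp [poch, Finset.prod_range_succ]

lemma poch_succ' (a : ℝ) (k : ℕ) : poch a (k+1) = a * poch (a+1) k := by
  simp only [poch, Finset.prod_range_succ']
  push_cast
  rw [add_zero, mul_comm]
  congr 1
  exact Finset.prod_congr rfl fun i _ => by push_cast; ring

lemma poch_ne_zero {a : ℝ} {k : ℕ} (h : ∀ j < k, a + (j:ℝ) ≠ 0) : poch a k ≠ 0 := by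
  rw [poch]
  exact Finset.prod_ne_zero_iff.2 fun i hi => h i (Finset.mem_range.1 hi)

lemma poch_neg_zero {n k : ℕ} (h : n < k) : poch (-(n:ℝ)) k = 0 := by
  rw [poch]
  exact Finset.prod_eq_zero (Finset.mem_range.2 h) (by simp)

noncomputable def cc (α β : ℝ) (n k : ℕ) : ℝ :=
  poch (-(n : ℝ)) k * poch (α + 1) k / ((k.factorial : ℝ) * poch (1 - β - (n : ℝ)) k)

lemma cc_eq_zero {α β : ℝ} {n k : ℕ} (h : n < k) : cc α β n k = 0 := by
  simp [cc, poch_neg_zero h]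

set_option maxHeartbeats 4000000 in
lemma keyCoeff (m j : ℕ) (α β : ℝ)
    (hb1 : β + (m:ℝ) ≠ 0)
    (ha1 : α + 1 + (m:ℝ) ≠ 0) (ha2 : α + 1 + ((m:ℝ)+1) ≠ 0)
    (ha3 : (m:ℝ) + 1 + α ≠ 0) (ha4 : (m:ℝ) + 1 + α + 1 ≠ 0)
    (hQ : poch (α + 1) m ≠ 0)
    (hr : poch (1 - β - ((m:ℝ)+1)) j ≠ 0)
    (hr1 : 1 - β - ((m:ℝ)+1) + (j:ℝ) ≠ 0)
    (h0 : 1 - β - ((m:ℝ)+1) ≠ 0)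
    (h2 : 1 - β - ((m:ℝ)+2) ≠ 0) :
    (poch β (m+2) / poch (α+1) (m+2)) * cc α β (m+2) (j+1)
      + (-(((m:ℝ)+1) + β) / (((m:ℝ)+1) + α + 1)) * ((poch β (m+1) / poch (α+1) (m+1)) * cc α β (m+1) (j+1))
    = (poch β (m+1) / poch (α+1) (m+1)) * cc α β (m+1) j
      + (-((((m:ℝ)+1)) * (((m:ℝ)+1) + α + β)) / ((((m:ℝ)+1) + α) * (((m:ℝ)+1) + α + 1)))
          * ((poch β m / poch (α+1) m) * cc α β m j) := by
  have hm1 : -((m:ℝ)+1) ≠ 0 := by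
    have : (0:ℝ) < (m:ℝ) + 1 := by positivity
    intro h; linarith [neg_eq_zero.1 h]
  have hm1' : (m:ℝ)+1 ≠ 0 := by positivity
  have hm2 : (m:ℝ)+2 ≠ 0 := by positivity
  have hneg : (-1:ℝ) + -(m:ℝ) ≠ 0 := by intro h; apply hm1'; linarith
  have hj1 : (j:ℝ)+1 ≠ 0 := by positivity
  have hF : ((j.factorial : ℝ)) ≠ 0 := by
    exact_mod_cast Nat.factorial_ne_zero j
  have h7 : poch (-((m:ℝ)+2)) (j+1) = (-((m:ℝ)+2)) * poch (-((m:ℝ)+1)) j := by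
    rw [poch_succ', show -((m:ℝ)+2)+1 = -((m:ℝ)+1) from by ring]
  have h8 : poch (1-β-((m:ℝ)+2)) (j+1) = (1-β-((m:ℝ)+2)) * poch (1-β-((m:ℝ)+1)) j := by
    rw [poch_succ', show 1-β-((m:ℝ)+2)+1 = 1-β-((m:ℝ)+1) from by ring]
  have h9 : poch (-((m:ℝ)+1)) (j+1) = poch (-((m:ℝ)+1)) j * (-((m:ℝ)+1) + (j:ℝ)) := poch_succ _ _
  have h10 : poch (1-β-((m:ℝ)+1)) (j+1) = poch (1-β-((m:ℝ)+1)) j * (1-β-((m:ℝ)+1)+(j:ℝ)) := poch_succ _ _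
  have h11 : poch (α+1) (j+1) = poch (α+1) j * (α+1+(j:ℝ)) := poch_succ _ _
  have h14 : poch β (m+1) = poch β m * (β+(m:ℝ)) := poch_succ _ _
  have h15 : poch (α+1) (m+1) = poch (α+1) m * (α+1+(m:ℝ)) := poch_succ _ _
  have h12 : poch β (m+2) = poch β m * (β+(m:ℝ)) * (β+((m:ℝ)+1)) := by
    rw [show m+2 = m+1+1 from rfl, poch_succ, h14]; push_cast; ring
  have h13 : poch (α+1) (m+2) = poch (α+1) m * (α+1+(m:ℝ)) * (α+1+((m:ℝ)+1)) := by
    rw [show m+2 = m+1+1 from rfl, poch_succ, h15]; push_cast; ring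
  have e1 : poch (-((m:ℝ)+1)) (j+1) = (-((m:ℝ)+1)) * poch (-((m:ℝ))) j := by
    rw [poch_succ', show -((m:ℝ)+1)+1 = -((m:ℝ)) from by ring]
  have e2 : poch (1-β-((m:ℝ)+1)) (j+1) = (1-β-((m:ℝ)+1)) * poch (1-β-(m:ℝ)) j := by
    rw [poch_succ', show 1-β-((m:ℝ)+1)+1 = 1-β-(m:ℝ) from by ring]
  have F1 : poch (-((m:ℝ))) j = poch (-((m:ℝ)+1)) j * (-((m:ℝ)+1)+(j:ℝ)) / (-((m:ℝ)+1)) := by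
    rw [eq_div_iff hm1]; linear_combination h9 - e1
  have F2 : poch (1-β-(m:ℝ)) j = poch (1-β-((m:ℝ)+1)) j * (1-β-((m:ℝ)+1)+(j:ℝ)) / (1-β-((m:ℝ)+1)) := by
    rw [eq_div_iff h0]; linear_combination h10 - e2
  have G1 : (poch β (m+2) / poch (α+1) (m+2)) * cc α β (m+2) (j+1) = (poch β m * (β+(m:ℝ)) * (β+((m:ℝ)+1)) * (-((m:ℝ)+2)) * poch (-((m:ℝ)+1)) j * poch (α+1) j * (α+1+(j:ℝ)) * (1-β-((m:ℝ)+1)+(j:ℝ)) * (1-β-((m:ℝ)+1)) * ((m:ℝ)+1)) / (poch (α+1) m * (α+1+(m:ℝ)) * (α+1+((m:ℝ)+1)) * (((j:ℝ)+1) * (j.factorial:ℝ)) * ((1-β-((m:ℝ)+2)) * poch (1-β-((m:ℝ)+1)) j) * ((1-β-((m:ℝ)+1)+(j:ℝ)) * (1-β-((m:ℝ)+1)) * ((m:ℝ)+1))) := by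
    simp only [cc]
    push_cast [Nat.factorial_succ]
    rw [h12, h13, h7, h11, h8]
    field_simp [hneg, hb1, ha1, ha2, ha3, ha4, hr, hr1, h0, h2, hm1', hm2, hj1, hF, hQ]
  have G2 : (-(((m:ℝ)+1) + β) / (((m:ℝ)+1) + α + 1)) * ((poch β (m+1) / poch (α+1) (m+1)) * cc α β (m+1) (j+1)) = (-(((m:ℝ)+1)+β) * poch β m * (β+(m:ℝ)) * poch (-((m:ℝ)+1)) j * (-((m:ℝ)+1)+(j:ℝ)) * poch (α+1) j * (α+1+(j:ℝ)) * (1-β-((m:ℝ)+2)) * (1-β-((m:ℝ)+1)) * ((m:ℝ)+1)) / (poch (α+1) m * (α+1+(m:ℝ)) * (α+1+((m:ℝ)+1)) * (((j:ℝ)+1) * (j.factorial:ℝ)) * ((1-β-((m:ℝ)+2)) * poch (1-β-((m:ℝ)+1)) j) * ((1-β-((m:ℝ)+1)+(j:ℝ)) * (1-β-((m:ℝ)+1)) * ((m:ℝ)+1))) := by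
    simp only [cc]
    push_cast [Nat.factorial_succ]
    rw [h14, h15, h9, h11, h10]
    field_simp [hneg, hb1, ha1, ha2, ha3, ha4, hr, hr1, h0, h2, hm1', hm2, hj1, hF, hQ]
    ring
  have G3 : (poch β (m+1) / poch (α+1) (m+1)) * cc α β (m+1) j = (poch β m * (β+(m:ℝ)) * poch (-((m:ℝ)+1)) j * poch (α+1) j * (α+1+((m:ℝ)+1)) * ((j:ℝ)+1) * (1-β-((m:ℝ)+2)) * (1-β-((m:ℝ)+1)+(j:ℝ)) * (1-β-((m:ℝ)+1)) * ((m:ℝ)+1)) / (poch (α+1) m * (α+1+(m:ℝ)) * (α+1+((m:ℝ)+1)) * (((j:ℝ)+1) * (j.factorial:ℝ)) * ((1-β-((m:ℝ)+2)) * poch (1-β-((m:ℝ)+1)) j) * ((1-β-((m:ℝ)+1)+(j:ℝ)) * (1-β-((m:ℝ)+1)) * ((m:ℝ)+1))) := by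
    simp only [cc]
    rw [h14, h15]
    push_cast
    field_simp [hneg, hb1, ha1, ha2, ha3, ha4, hr, hr1, h0, h2, hm1', hm2, hj1, hF, hQ]
  have G4 : (-((((m:ℝ)+1)) * (((m:ℝ)+1) + α + β)) / ((((m:ℝ)+1) + α) * (((m:ℝ)+1) + α + 1))) * ((poch β m / poch (α+1) m) * cc α β m j) = ((((m:ℝ)+1) * (((m:ℝ)+1)+α+β)) * poch β m * poch (-((m:ℝ)+1)) j * (-((m:ℝ)+1)+(j:ℝ)) * poch (α+1) j * (1-β-((m:ℝ)+1))^2 * ((j:ℝ)+1) * (1-β-((m:ℝ)+2))) / (poch (α+1) m * (α+1+(m:ℝ)) * (α+1+((m:ℝ)+1)) * (((j:ℝ)+1) * (j.factorial:ℝ)) * ((1-β-((m:ℝ)+2)) * poch (1-β-((m:ℝ)+1)) j) * ((1-β-((m:ℝ)+1)+(j:ℝ)) * (1-β-((m:ℝ)+1)) * ((m:ℝ)+1))) := by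
    simp only [cc]
    rw [F1, F2]
    field_simp [hneg, hb1, ha1, ha2, ha3, ha4, hr, hr1, h0, h2, hm1', hm2, hj1, hF, hQ]
    ring
  have key : (poch β m * (β+(m:ℝ)) * (β+((m:ℝ)+1)) * (-((m:ℝ)+2)) * poch (-((m:ℝ)+1)) j * poch (α+1) j * (α+1+(j:ℝ)) * (1-β-((m:ℝ)+1)+(j:ℝ)) * (1-β-((m:ℝ)+1)) * ((m:ℝ)+1)) + (-(((m:ℝ)+1)+β) * poch β m * (β+(m:ℝ)) * poch (-((m:ℝ)+1)) j * (-((m:ℝ)+1)+(j:ℝ)) * poch (α+1) j * (α+1+(j:ℝ)) * (1-β-((m:ℝ)+2)) * (1-β-((m:ℝ)+1)) * ((m:ℝ)+1)) = (poch β m * (β+(m:ℝ)) * poch (-((m:ℝ)+1)) j * poch (α+1) j * (α+1+((m:ℝ)+1)) * ((j:ℝ)+1) * (1-β-((m:ℝ)+2)) * (1-β-((m:ℝ)+1)+(j:ℝ)) * (1-β-((m:ℝ)+1)) * ((m:ℝ)+1)) + ((((m:ℝ)+1) * (((m:ℝ)+1)+α+β)) * poch β m * poch (-((m:ℝ)+1))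 j * (-((m:ℝ)+1)+(j:ℝ)) * poch (α+1) j * (1-β-((m:ℝ)+1))^2 * ((j:ℝ)+1) * (1-β-((m:ℝ)+2))) := by ring
  rw [G1, G2, G3, G4, ← add_div, ← add_div, key]

lemma keyCoeff0 (m : ℕ) (α β : ℝ)
    (ha1 : α + 1 + (m:ℝ) ≠ 0) (ha2 : α + 1 + ((m:ℝ)+1) ≠ 0) (ha4 : (m:ℝ) + 1 + α + 1 ≠ 0)
    (hQ : poch (α + 1) m ≠ 0) :
    (poch β (m+2) / poch (α+1) (m+2)) * cc α β (m+2) 0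
      + (-(((m:ℝ)+1) + β) / (((m:ℝ)+1) + α + 1)) * ((poch β (m+1) / poch (α+1) (m+1)) * cc α β (m+1) 0) = 0 := by
  have h14 : poch β (m+1) = poch β m * (β+(m:ℝ)) := poch_succ _ _
  have h15 : poch (α+1) (m+1) = poch (α+1) m * (α+1+(m:ℝ)) := poch_succ _ _
  have h12 : poch β (m+2) = poch β m * (β+(m:ℝ)) * (β+((m:ℝ)+1)) := by
    rw [show m+2 = m+1+1 from rfl, poch_succ, h14]; push_cast; ring
  have h13 : poch (α+1) (m+2) = poch (α+1) m * (α+1+(m:ℝ)) * (α+1+((m:ℝ)+1)) := by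
    rw [show m+2 = m+1+1 from rfl, poch_succ, h15]; push_cast; ring
  have hc : ∀ N : ℕ, cc α β N 0 = 1 := by
    intro N; simp [cc, poch]
  rw [hc, hc, h12, h13, h14, h15]
  field_simp
  ring

lemma keyCoeffTop (m : ℕ) (α β : ℝ)
    (ha2 : α + 1 + ((m:ℝ)+1) ≠ 0) (ha4 : (m:ℝ) + 1 + α + 1 ≠ 0)
    (hb2 : β + ((m:ℝ)+1) ≠ 0)
    (h2 : 1 - β - ((m:ℝ)+2) ≠ 0)
    (hQ1 : poch (α + 1) (m+1) ≠ 0)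
    (hr : poch (1 - β - ((m:ℝ)+1)) (m+1) ≠ 0) :
    (poch β (m+2) / poch (α+1) (m+2)) * cc α β (m+2) (m+2)
      + (-(((m:ℝ)+1) + β) / (((m:ℝ)+1) + α + 1)) * ((poch β (m+1) / poch (α+1) (m+1)) * cc α β (m+1) (m+2))
    = (poch β (m+1) / poch (α+1) (m+1)) * cc α β (m+1) (m+1)
      + (-((((m:ℝ)+1)) * (((m:ℝ)+1) + α + β)) / ((((m:ℝ)+1) + α) * (((m:ℝ)+1) + α + 1)))
          * ((poch β m / poch (α+1) m) * cc α β m (m+1)) := by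
  rw [cc_eq_zero (show m+1 < m+2 by omega), cc_eq_zero (show m < m+1 by omega)]
  simp only [mul_zero, add_zero]
  have hF : ((m+1).factorial : ℝ) ≠ 0 := by exact_mod_cast Nat.factorial_ne_zero (m+1)
  have hm2 : (m:ℝ)+1+1 ≠ 0 := by positivity
  have hA : poch (-((m:ℝ)+1+1)) (m+1+1) = (-((m:ℝ)+1+1)) * poch (-((m:ℝ)+1)) (m+1) := by
    rw [poch_succ', show -((m:ℝ)+1+1)+1 = -((m:ℝ)+1) from by ring]
  have hC : poch (1-β-((m:ℝ)+1+1)) (m+1+1) = (1-β-((m:ℝ)+1+1)) * poch (1-β-((m:ℝ)+1)) (m+1) := by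
    rw [poch_succ', show 1-β-((m:ℝ)+1+1)+1 = 1-β-((m:ℝ)+1) from by ring]
  have hB : poch (α+1) (m+1+1) = poch (α+1) (m+1) * (α+1+((m:ℝ)+1)) := by
    have := poch_succ (α+1) (m+1); push_cast at this ⊢; exact this
  have h12 : poch β (m+1+1) = poch β (m+1) * (β+((m:ℝ)+1)) := by
    have := poch_succ β (m+1); push_cast at this ⊢; exact this
  simp only [cc]
  rw [show m+2 = m+1+1 from rfl]
  push_cast [Nat.factorial_succ]
  rw [hA, hB, hC, h12]
  have h2' : 1 - β - ((m:ℝ)+1+1) ≠ 0 := by intro h; apply h2; linarith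
  field_simp
  ring

theorem hr_three_term_recurrence (n : ℕ) (α β : ℝ)
    (hα0 : (n : ℝ) + α ≠ 0) (hα1 : (n : ℝ) + α + 1 ≠ 0)
    (hβ : ∀ j < n + 1, β + (j : ℝ) ≠ 0)
    (hα : ∀ j < n + 1, α + 1 + (j : ℝ) ≠ 0)
    (hd : ∀ m ≤ n + 1, ∀ j < m, 1 - β - (m : ℝ) + (j : ℝ) ≠ 0) :
    ∀ z : ℝ,
      HR (n + 1) α β z + (-((n : ℝ) + β) / ((n : ℝ) + α + 1)) * HR n α β z
        = z * (HR n α β z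
            + (-((n : ℝ) * ((n : ℝ) + α + β)) / (((n : ℝ) + α) * ((n : ℝ) + α + 1)))
              * (if n = 0 then 0 else HR (n - 1) α β z)) := by
  intro z
  cases n with
  | zero =>
    rw [if_pos rfl]
    have hb : β ≠ 0 := by have := hβ 0 (by omega); simpa using this
    have ha : α + 1 ≠ 0 := by have := hα 0 (by omega); simpa using this
    have hnb : (1:ℝ) - β - 1 ≠ 0 := by
      have := hd 1 (by omega) 0 (by omega); push_cast at this
      intro h; apply this; linarith
    norm_num [HR, poch, Finset.sum_range_succ, Nat.factorial]
    field_simp [hb, ha, hnb]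
    ring
  | succ m =>
    rw [if_neg (by omega : ¬ (m + 1 = 0))]
    simp only [Nat.add_sub_cancel]
    push_cast
    have ha1 : α + 1 + (m:ℝ) ≠ 0 := hα m (by omega)
    have ha2 : α + 1 + ((m:ℝ)+1) ≠ 0 := by
      have := hα (m+1) (by omega); push_cast at this; exact this
    have ha3 : (m:ℝ)+1+α ≠ 0 := by push_cast at hα0; exact hα0
    have ha4 : (m:ℝ)+1+α+1 ≠ 0 := by push_cast at hα1; exact hα1
    have hb1 : β + (m:ℝ) ≠ 0 := hβ m (by omega)
    have hb2 : β + ((m:ℝ)+1) ≠ 0 := by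
      have := hβ (m+1) (by omega); push_cast at this; exact this
    have h2 : 1 - β - ((m:ℝ)+2) ≠ 0 := by
      have := hd (m+2) (by omega) 0 (by omega); push_cast at this
      intro h; apply this; linarith
    have h0 : 1 - β - ((m:ℝ)+1) ≠ 0 := by
      have := hd (m+1) (by omega) 0 (by omega); push_cast at this
      intro h; apply this; linarith
    have hQ : poch (α+1) m ≠ 0 := poch_ne_zero (fun i hi => hα i (by omega))
    have hQ1 : poch (α+1) (m+1) ≠ 0 := poch_ne_zero (fun i hi => hα i (by omega))
    have hr' : ∀ j, j ≤ m+1 → poch (1-β-((m:ℝ)+1)) j ≠ 0 := by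
      intro j hj
      apply poch_ne_zero
      intro i hi
      have := hd (m+1) (by omega) i (by omega); push_cast at this; exact this
    have hr1' : ∀ j : ℕ, j < m+1 → 1-β-((m:ℝ)+1) + (j:ℝ) ≠ 0 := by
      intro j hj
      have := hd (m+1) (by omega) j (by omega); push_cast at this; exact this
    have hHR : ∀ N, HR N α β z
        = (poch β N / poch (α+1) N) * ∑ k ∈ Finset.range (N+1), cc α β N k * z^k :=
      fun N => rfl
    rw [hHR, hHR, hHR]
    simp only [show m+1+1 = m+2 from rfl]
    have eL : (poch β (m+2) / poch (α+1) (m+2)) * (∑ k ∈ Finset.range (m+2+1), cc α β (m+2) k * z^k) + (-(((m:ℝ)+1) + β) / (((m:ℝ)+1) + α + 1)) * ((poch β (m+1) / poch (α+1) (m+1)) * (∑ k ∈ Finset.range (m+1+1), cc α β (m+1) k * z^k))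
        = ∑ k ∈ Finset.range (m+2+1),
            ((poch β (m+2) / poch (α+1) (m+2)) * cc α β (m+2) k + (-(((m:ℝ)+1) + β) / (((m:ℝ)+1) + α + 1)) * ((poch β (m+1) / poch (α+1) (m+1)) * cc α β (m+1) k)) * z^k := by
      rw [Finset.mul_sum, Finset.mul_sum, Finset.mul_sum]
      have ext : (∑ k ∈ Finset.range (m+2+1), (-(((m:ℝ)+1) + β) / (((m:ℝ)+1) + α + 1)) * ((poch β (m+1) / poch (α+1) (m+1)) * (cc α β (m+1) k * z^k)))
          = ∑ k ∈ Finset.range (m+1+1), (-(((m:ℝ)+1) + β) / (((m:ℝ)+1) + α + 1)) * ((poch β (m+1) / poch (α+1) (m+1)) * (cc α β (m+1) k * z^k)) := by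
        rw [show m+2+1 = (m+1+1)+1 from rfl, Finset.sum_range_succ,
          cc_eq_zero (show m+1 < m+1+1 by omega)]
        simp
      rw [← ext, ← Finset.sum_add_distrib]
      exact Finset.sum_congr rfl fun k _ => by ring
    have eR : z * ((poch β (m+1) / poch (α+1) (m+1)) * (∑ k ∈ Finset.range (m+1+1), cc α β (m+1) k * z^k) + (-((((m:ℝ)+1)) * (((m:ℝ)+1) + α + β)) / ((((m:ℝ)+1) + α) * (((m:ℝ)+1) + α + 1))) * ((poch β m / poch (α+1) m) * (∑ k ∈ Finset.range (m+1), cc α β m k * z^k)))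
        = ∑ k ∈ Finset.range (m+1+1),
            ((poch β (m+1) / poch (α+1) (m+1)) * cc α β (m+1) k + (-((((m:ℝ)+1)) * (((m:ℝ)+1) + α + β)) / ((((m:ℝ)+1) + α) * (((m:ℝ)+1) + α + 1))) * ((poch β m / poch (α+1) m) * cc α β m k)) * z^(k+1) := by
      rw [Finset.mul_sum, Finset.mul_sum, Finset.mul_sum]
      have ext : (∑ k ∈ Finset.range (m+1+1), (-((((m:ℝ)+1)) * (((m:ℝ)+1) + α + β)) / ((((m:ℝ)+1) + α) * (((m:ℝ)+1) + α + 1))) * ((poch β m / poch (α+1) m) * (cc α β m k * z^k)))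
          = ∑ k ∈ Finset.range (m+1), (-((((m:ℝ)+1)) * (((m:ℝ)+1) + α + β)) / ((((m:ℝ)+1) + α) * (((m:ℝ)+1) + α + 1))) * ((poch β m / poch (α+1) m) * (cc α β m k * z^k)) := by
        rw [Finset.sum_range_succ, cc_eq_zero (show m < m+1 by omega)]
        simp
      rw [← ext, ← Finset.sum_add_distrib, Finset.mul_sum]
      exact Finset.sum_congr rfl fun k _ => by ring
    rw [eL, eR]
    rw [show m+2+1 = (m+1+1)+1 from rfl, Finset.sum_range_succ']
    have L0 : ((poch β (m+2) / poch (α+1) (m+2)) * cc α β (m+2) 0 + (-(((m:ℝ)+1) + β) / (((m:ℝ)+1) + α + 1)) * ((poch β (m+1) / poch (α+1) (m+1)) * cc α β (m+1) 0)) * z^0 = 0 := by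
      rw [keyCoeff0 m α β ha1 ha2 ha4 hQ]; ring
    rw [L0, add_zero]
    apply Finset.sum_congr rfl
    intro k hk
    have hk' : k < m+1+1 := Finset.mem_range.1 hk
    by_cases hc : k < m+1
    · rw [keyCoeff m k α β hb1 ha1 ha2 ha3 ha4 hQ (hr' k (by omega)) (hr1' k hc) h0 h2]
    · have hkm : k = m+1 := by omega
      subst hkm
      simp only [show m+1+1 = m+2 from rfl]
      rw [keyCoeffTop m α β ha2 ha4 hb2 h2 hQ1 (hr' (m+1) le_rfl)]
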